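/- Let X be a metric space and let (p_n) be a sequence of Borel probability measures on X converging weakly to a Borel probability measure p. Suppose O ⊆ X is open, D ⊆ X is closed, and ν is a finite Borel measure such that p_n((O \ D) ∩ B) ≤ ν(B) for every Borel set B and every n. Then p((O \ D) ∩ B) ≤ ν(B) for every Borel set B. -/

import Mathlib

open MeasureTheory Filter

theorem stmt_1 {X : Type*} [MetricSpace X] [MeasurableSpace X] [BorelSpace X]
    (p : ℕ → ProbabilityMeasure X) (q : ProbabilityMeasure X)
    (hweak : Tendsto p atTop (nhds q))
    (O D : Set X) (hO : IsOpen O) (hD : IsClosed D)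
    (ν : Measure X) [IsFiniteMeasure ν]
    (hmaj : ∀ B : Set X, MeasurableSet B → ∀ n : ℕ,
      (p n : Measure X) ((O \ D) ∩ B) ≤ ν B) :
    ∀ B : Set X, MeasurableSet B → (q : Measure X) ((O \ D) ∩ B) ≤ ν B := by
  intro B hB
  -- first, the result for open sets
  have key : ∀ U : Set X, IsOpen U → (q : Measure X) ((O \ D) ∩ U) ≤ ν U := by
    intro U hU
    have hOD : IsOpen ((O \ D) ∩ U) := ((hO.sdiff hD).inter hU)
    calc (q : Measure X) ((O \ D) ∩ U)
        ≤ atTop.liminf fun n ↦ (p n : Measure X) ((O \ D) ∩ U) :=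
          ProbabilityMeasure.le_liminf_measure_open_of_tendsto hweak hOD
      _ ≤ ν U := by
          apply liminf_le_of_le
          · exact ⟨0, Filter.eventually_map.mpr (Eventually.of_forall fun n => zero_le)⟩
          · intro b hb
            obtain ⟨n, hn⟩ := hb.exists
            exact hn.trans (hmaj U hU.measurableSet n)
  rw [B.measure_eq_iInf_isOpen (μ := ν)]
  simp only [le_iInf_iff]
  intro U hBU hU
  exact (measure_mono (Set.inter_subset_inter_right _ hBU)).trans (key U hU)
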